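/- Let P = {μ̂_1, ..., μ̂_N} be N points in ℝ^d, let μ ∈ ℝ^d and r > 0, and suppose at least (7/10)·N of the points satisfy ‖μ̂_i - μ‖ ≤ r. If q ∈ ℝ^d satisfies ‖q - μ‖ > 10r, then ‖∑_{i=1}^N (q - μ̂_i)/‖q - μ̂_i‖‖ ≥ (3/10)·N. -/

import Mathlib

open Finset

lemma unit_diff_le {E : Type*} [NormedAddCommGroup E] [NormedSpace ℝ E]
    (v w : E) (hv : v ≠ 0) (hw : w ≠ 0) :
    ‖‖v‖⁻¹ • v - ‖w‖⁻¹ • w‖ ≤ 2 * ‖v - w‖ / ‖v‖ := by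
  have hv0 : (0:ℝ) < ‖v‖ := norm_pos_iff.2 hv
  have hw0 : (0:ℝ) < ‖w‖ := norm_pos_iff.2 hw
  have key : ‖v‖⁻¹ • v - ‖w‖⁻¹ • w = ‖v‖⁻¹ • (v - w) + (‖v‖⁻¹ - ‖w‖⁻¹) • w := by
    rw [smul_sub, sub_smul]; abel
  rw [key]
  have h1 : ‖‖v‖⁻¹ • (v - w)‖ = ‖v - w‖ / ‖v‖ := by
    rw [norm_smul, norm_inv, norm_norm]; ring
  have h2 : ‖(‖v‖⁻¹ - ‖w‖⁻¹) • w‖ ≤ ‖v - w‖ / ‖v‖ := by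
    rw [norm_smul, Real.norm_eq_abs]
    have e : ‖v‖⁻¹ - ‖w‖⁻¹ = (‖w‖ - ‖v‖) / (‖v‖ * ‖w‖) := by
      field_simp
    rw [e, abs_div, abs_of_pos (mul_pos hv0 hw0)]
    have habs : |‖w‖ - ‖v‖| ≤ ‖v - w‖ := by
      rw [norm_sub_rev]; exact abs_norm_sub_norm_le w v
    rw [div_mul_eq_mul_div, div_le_div_iff₀ (mul_pos hv0 hw0) hv0]
    calc |‖w‖ - ‖v‖| * ‖w‖ * ‖v‖ ≤ ‖v - w‖ * ‖w‖ * ‖v‖ := by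
          gcongr
      _ = ‖v - w‖ * (‖v‖ * ‖w‖) := by ring
  calc ‖‖v‖⁻¹ • (v - w) + (‖v‖⁻¹ - ‖w‖⁻¹) • w‖
      ≤ ‖‖v‖⁻¹ • (v - w)‖ + ‖(‖v‖⁻¹ - ‖w‖⁻¹) • w‖ := norm_add_le _ _
    _ ≤ ‖v - w‖ / ‖v‖ + ‖v - w‖ / ‖v‖ := by rw [h1]; linarith
    _ = 2 * ‖v - w‖ / ‖v‖ := by ring

/-- Lower bound on the norm of the geometric-median gradient at a far point:
if at least `(7/10)·N` of the `μ̂ i` satisfy `‖μ̂ i - μ‖ ≤ r` and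
`‖q - μ‖ > 10r`, then `‖∑ i, (q - μ̂ i)/‖q - μ̂ i‖‖ ≥ (3/10)·N`. -/
theorem gradient_norm_lower_bound (d N : ℕ)
    (μhat : Fin N → EuclideanSpace ℝ (Fin d))
    (μ q : EuclideanSpace ℝ (Fin d)) (r : ℝ) (hr : 0 < r)
    (hgood : (7 / 10 : ℝ) * N ≤
      ((Finset.univ.filter fun i => ‖μhat i - μ‖ ≤ r).card : ℝ))
    (hne : ∀ i, q ≠ μhat i)
    (hfar : 10 * r < ‖q - μ‖) :
    (3 / 10 : ℝ) * N ≤ ‖∑ i, ‖q - μhat i‖⁻¹ • (q - μhat i)‖ := by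
  classical
  set v := q - μ with hv
  have ht : (0:ℝ) < ‖v‖ := lt_trans (by positivity) hfar
  have hvne : v ≠ 0 := norm_pos_iff.1 ht
  set u := ‖v‖⁻¹ • v with hu_def
  have hu : ‖u‖ = 1 := norm_smul_inv_norm hvne
  set f : Fin N → EuclideanSpace ℝ (Fin d) :=
    fun i => ‖q - μhat i‖⁻¹ • (q - μhat i) with hf
  have hfne : ∀ i, q - μhat i ≠ 0 := fun i => sub_ne_zero.2 (hne i)
  have hfnorm : ∀ i, ‖f i‖ = 1 := fun i => norm_smul_inv_norm (hfne i)
  have hlow : ∀ i, (-1:ℝ) ≤ inner ℝ u (f i) := by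
    intro i
    have h := abs_real_inner_le_norm u (f i)
    rw [hu, hfnorm i, one_mul] at h
    linarith [neg_abs_le (inner ℝ u (f i) : ℝ)]
  have hgoodb : ∀ i, ‖μhat i - μ‖ ≤ r → (49/50 : ℝ) ≤ inner ℝ u (f i) := by
    intro i hi
    have hdiff : ‖v - (q - μhat i)‖ ≤ r := by
      have hre : v - (q - μhat i) = μhat i - μ := by rw [hv]; abel
      rw [hre]; exact hi
    have h5 : ‖u - f i‖ ≤ 1/5 := by
      have hul := unit_diff_le v (q - μhat i) hvne (hfne i)
      have h2 : 2 * ‖v - (q - μhat i)‖ / ‖v‖ ≤ 1/5 := by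
        rw [div_le_iff₀ ht]
        nlinarith
      calc ‖u - f i‖ ≤ 2 * ‖v - (q - μhat i)‖ / ‖v‖ := hul
        _ ≤ 1/5 := h2
    have hsq : ‖u - f i‖^2 = 2 - 2 * inner ℝ u (f i) := by
      rw [norm_sub_sq_real, hu, hfnorm]; ring
    nlinarith [norm_nonneg (u - f i)]
  have hinnersum : (inner ℝ u (∑ i, f i) : ℝ) = ∑ i, (inner ℝ u (f i) : ℝ) :=
    inner_sum _ _ _
  have hle : (inner ℝ u (∑ i, f i) : ℝ) ≤ ‖∑ i, f i‖ := by
    calc (inner ℝ u (∑ i, f i) : ℝ) ≤ ‖u‖ * ‖∑ i, f i‖ := real_inner_le_norm _ _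
      _ = ‖∑ i, f i‖ := by rw [hu, one_mul]
  set S := Finset.univ.filter fun i => ‖μhat i - μ‖ ≤ r with hS
  have hsplit : ∑ i, (inner ℝ u (f i) : ℝ)
      = ∑ i ∈ S, (inner ℝ u (f i) : ℝ) + ∑ i ∈ Sᶜ, (inner ℝ u (f i) : ℝ) :=
    (Finset.sum_add_sum_compl S _).symm
  have h1 : (49/50:ℝ) * S.card ≤ ∑ i ∈ S, (inner ℝ u (f i) : ℝ) := by
    have h := Finset.card_nsmul_le_sum S (fun i => (inner ℝ u (f i):ℝ)) (49/50)
      (fun i hi => hgoodb i (by simpa [hS] using hi))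
    simpa [nsmul_eq_mul, mul_comm] using h
  have h2 : (-1:ℝ) * Sᶜ.card ≤ ∑ i ∈ Sᶜ, (inner ℝ u (f i) : ℝ) := by
    have h := Finset.card_nsmul_le_sum Sᶜ (fun i => (inner ℝ u (f i):ℝ)) (-1)
      (fun i _ => hlow i)
    simpa [nsmul_eq_mul, mul_comm] using h
  have hSN : S.card ≤ N := by
    simpa using Finset.card_le_univ S
  have hcard : (Sᶜ.card : ℝ) = N - S.card := by
    rw [Finset.card_compl]
    simp only [Fintype.card_fin]
    rw [Nat.cast_sub hSN]
  have hgood' : (7 / 10 : ℝ) * N ≤ (S.card : ℝ) := hgood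
  have := hle
  rw [hinnersum, hsplit] at this
  linarith
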